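/- Let α ≥ 1. The maximum over (x, y) ∈ ℝ² (with (x+y)^{2α}(x+y) ≠ y^{2α}y) of the function f(x,y) = ((2(α+1)x + y)(x+y)^{2α} − y·y^{2α}) / ((x+y)(x+y)^{2α} − y·y^{2α}) equals 2((α+1)m + 1)/(m+1), where m ∈ [−3, −2) is the unique nonzero solution of (m+1)^{2α}(m+1) = (2α+1)m + 1 (m = −3 if α = 1). -/

import Mathlib

open Set

private lemma phi_hasDerivAt (α : ℝ) (hα : 1 ≤ α) (t : ℝ) :
    HasDerivAt (fun u : ℝ => u * (u ^ 2) ^ α) ((2 * α + 1) * (t ^ 2) ^ α) t := by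
  have hin : HasDerivAt (fun u : ℝ => u ^ 2) (2 * t) t := by
    simpa using hasDerivAt_pow 2 t
  have h1 : HasDerivAt (fun u : ℝ => (u ^ 2) ^ α) (2 * t * α * (t ^ 2) ^ (α - 1)) t :=
    hin.rpow_const (Or.inr hα)
  have h2 := (hasDerivAt_id t).mul h1
  have hk : (t ^ 2) ^ (α - 1) * t ^ 2 = (t ^ 2) ^ α := by
    have h := Real.rpow_add' (sq_nonneg t) (show (α - 1) + 1 ≠ 0 by intro h; nlinarith)
    rw [Real.rpow_one] at h
    rw [← h]; norm_num
  refine h2.congr_deriv ?_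
  simp only [id]
  rw [← hk]; ring

private lemma phi_continuous (α : ℝ) (hα : 1 ≤ α) :
    Continuous (fun u : ℝ => u * (u ^ 2) ^ α) := by
  rw [continuous_iff_continuousAt]
  exact fun x => (phi_hasDerivAt α hα x).continuousAt

private lemma phi_lt (α : ℝ) (hα : 1 ≤ α) {a b : ℝ} (h : a < b) :
    a * (a ^ 2) ^ α < b * (b ^ 2) ^ α := by
  have hmono : ∀ u v : ℝ, 0 ≤ u → u < v → u * (u ^ 2) ^ α < v * (v ^ 2) ^ α := by
    intro u v hu huv
    have hv : 0 < v := lt_of_le_of_lt hu huv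
    have h1 : (u ^ 2) ^ α ≤ (v ^ 2) ^ α :=
      Real.rpow_le_rpow (sq_nonneg u) (by nlinarith) (by linarith)
    have h2 : 0 < (v ^ 2) ^ α := Real.rpow_pos_of_pos (by nlinarith) α
    have h3 : 0 ≤ (u ^ 2) ^ α := Real.rpow_nonneg (sq_nonneg u) α
    nlinarith
  rcases le_or_gt 0 a with ha | ha
  · exact hmono a b ha h
  rcases le_or_gt b 0 with hb | hb
  · have := hmono (-b) (-a) (by linarith) (by linarith)
    rw [neg_sq, neg_sq] at this
    linarith
  · have h1 : a * (a ^ 2) ^ α < 0 :=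
      mul_neg_of_neg_of_pos ha (Real.rpow_pos_of_pos (by nlinarith) α)
    have h2 : 0 < b * (b ^ 2) ^ α :=
      mul_pos hb (Real.rpow_pos_of_pos (by nlinarith) α)
    linarith

private lemma h_nonneg (α m : ℝ) (hα : 1 ≤ α) (hm2 : m < -2)
    (hmeq : ((m + 1) ^ 2) ^ α * (m + 1) = (2 * α + 1) * m + 1) :
    ∀ σ : ℝ, σ ≤ 1 →
      (2 * α + 1) * (1 - σ) ≤ ((m + 1) ^ 2) ^ α * (1 - σ * (σ ^ 2) ^ α) := by
  have hm1 : m + 1 < -1 := by linarith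
  have hm1ne : m + 1 ≠ 0 := by intro h; linarith
  obtain ⟨C, hCdef⟩ : ∃ C : ℝ, C = ((m + 1) ^ 2) ^ α := ⟨_, rfl⟩
  obtain ⟨s₀, hs₀def⟩ : ∃ s₀ : ℝ, s₀ = 1 / (m + 1) := ⟨_, rfl⟩
  obtain ⟨r, hrdef⟩ : ∃ r : ℝ, r = -s₀ := ⟨_, rfl⟩
  have hmeqC : C * (m + 1) = (2 * α + 1) * m + 1 := by rw [hCdef]; exact hmeq
  have hs₀ : s₀ * (m + 1) = 1 := by rw [hs₀def]; field_simp
  have hms₀ : (m + 1) * s₀ = 1 := by rw [mul_comm]; exact hs₀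
  have hs0neg : s₀ < 0 := by nlinarith
  have hs0gt : -1 < s₀ := by nlinarith
  have hr0 : 0 < r := by rw [hrdef]; linarith
  have hr1 : r < 1 := by rw [hrdef]; linarith
  have hmr : (m + 1) * r = -1 := by rw [hrdef, mul_neg, hms₀]
  set h : ℝ → ℝ := fun σ => C * (1 - σ * (σ ^ 2) ^ α) - (2 * α + 1) * (1 - σ) with hhdef
  have hderiv : ∀ σ : ℝ, HasDerivAt h ((2 * α + 1) - C * ((2 * α + 1) * (σ ^ 2) ^ α)) σ := by
    intro σ
    have h1 := ((hasDerivAt_const σ (1 : ℝ)).sub (phi_hasDerivAt α hα σ)).const_mul C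
    have h2 := ((hasDerivAt_id σ).const_sub (1 : ℝ)).const_mul (2 * α + 1)
    have h3 := h1.sub h2
    refine h3.congr_deriv ?_
    ring
  have hdiff : Differentiable ℝ h := fun σ => (hderiv σ).differentiableAt
  have hderiv' : ∀ σ : ℝ, deriv h σ = (2 * α + 1) - C * ((2 * α + 1) * (σ ^ 2) ^ α) :=
    fun σ => (hderiv σ).deriv
  have hCmul : ∀ σ : ℝ, C * ((2 * α + 1) * (σ ^ 2) ^ α)
      = (2 * α + 1) * ((((m + 1) * σ) ^ 2) ^ α) := by
    intro σ
    rw [hCdef, show (((m + 1) * σ) ^ 2) = (m + 1) ^ 2 * σ ^ 2 by ring,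
      Real.mul_rpow (sq_nonneg _) (sq_nonneg _)]
    ring
  -- h s₀ = 0
  have hCs₀ : C * (s₀ ^ 2) ^ α = 1 := by
    have := hCmul s₀
    rw [hms₀] at this
    rw [one_pow, Real.one_rpow, mul_one] at this
    nlinarith [this]
  have hhs₀ : h s₀ = 0 := by
    have e0 : h s₀ = C - C * (s₀ ^ 2) ^ α * s₀ - (2 * α + 1) * (1 - s₀) := by
      rw [hhdef]; ring
    rw [e0, hCs₀]
    have h2 : (C - 1 * s₀ - (2 * α + 1) * (1 - s₀)) * (m + 1) = 0 := by
      linear_combination hmeqC + (2 * α) * hs₀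
    rcases mul_eq_zero.1 h2 with h3 | h3
    · linarith
    · exact absurd h3 hm1ne
  have hh1 : h 1 = 0 := by
    rw [hhdef]
    simp [Real.one_rpow]
  -- deriv signs
  have hone : ∀ u : ℝ, 1 ≤ u ^ 2 → (2 * α + 1) - (2 * α + 1) * (u ^ 2) ^ α ≤ 0 := by
    intro u hu
    have : (1 : ℝ) ≤ (u ^ 2) ^ α := Real.one_le_rpow hu (by linarith)
    nlinarith
  have hant1 : AntitoneOn h (Iic s₀) := by
    apply antitoneOn_of_deriv_nonpos (convex_Iic s₀) hdiff.continuous.continuousOn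
      hdiff.differentiableOn
    intro σ hσ
    rw [interior_Iic] at hσ
    rw [hderiv', hCmul σ]
    apply hone
    have h1 : 1 < (m + 1) * σ := by
      have := mul_lt_mul_of_neg_left (show σ < s₀ from hσ) (show m + 1 < 0 by linarith)
      rw [hms₀] at this
      linarith
    nlinarith
  have hmono2 : MonotoneOn h (Icc s₀ r) := by
    apply monotoneOn_of_deriv_nonneg (convex_Icc s₀ r) hdiff.continuous.continuousOn
      hdiff.differentiableOn
    intro σ hσ
    rw [interior_Icc] at hσ
    rw [hderiv', hCmul σ]
    have h1 : (m + 1) * σ < 1 := by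
      have := mul_lt_mul_of_neg_left (show s₀ < σ from hσ.1) (show m + 1 < 0 by linarith)
      rw [hms₀] at this
      linarith
    have h2 : -1 < (m + 1) * σ := by
      have := mul_lt_mul_of_neg_left (show σ < r from hσ.2) (show m + 1 < 0 by linarith)
      rw [hmr] at this
      linarith
    have hle : ((((m + 1) * σ) ^ 2)) ^ α ≤ 1 :=
      Real.rpow_le_one (sq_nonneg _) (by nlinarith) (by linarith)
    nlinarith
  have hant3 : AntitoneOn h (Icc r 1) := by
    apply antitoneOn_of_deriv_nonpos (convex_Icc r 1) hdiff.continuous.continuousOn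
      hdiff.differentiableOn
    intro σ hσ
    rw [interior_Icc] at hσ
    rw [hderiv', hCmul σ]
    apply hone
    have h1 : (m + 1) * σ < -1 := by
      have := mul_lt_mul_of_neg_left (show r < σ from hσ.1) (show m + 1 < 0 by linarith)
      rw [hmr] at this
      linarith
    nlinarith
  -- conclude
  intro σ hσ
  have hgoal : 0 ≤ h σ := by
    rcases le_or_gt σ s₀ with h1 | h1
    · have := hant1 (mem_Iic.2 h1) (mem_Iic.2 le_rfl) h1
      linarith [hhs₀]
    rcases le_or_gt σ r with h2 | h2
    · have := hmono2 (mem_Icc.2 ⟨le_rfl, by linarith⟩) (mem_Icc.2 ⟨le_of_lt h1, h2⟩) (le_of_lt h1)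
      linarith [hhs₀]
    · have := hant3 (mem_Icc.2 ⟨le_of_lt h2, hσ⟩) (mem_Icc.2 ⟨by linarith, le_rfl⟩) hσ
      linarith [hh1]
  have he : h σ = C * (1 - σ * (σ ^ 2) ^ α) - (2 * α + 1) * (1 - σ) := by rw [hhdef]
  rw [he, hCdef] at hgoal
  linarith

private lemma key_ineq (α m : ℝ) (hα : 1 ≤ α) (hm2 : m < -2)
    (hmeq : ((m + 1) ^ 2) ^ α * (m + 1) = (2 * α + 1) * m + 1)
    {s t : ℝ} (hst : s < t) :
    (2 * α + 1) * (t - s) * (t ^ 2) ^ α ≤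
      ((m + 1) ^ 2) ^ α * (t * (t ^ 2) ^ α - s * (s ^ 2) ^ α) := by
  have hC1 : (1 : ℝ) ≤ ((m + 1) ^ 2) ^ α := Real.one_le_rpow (by nlinarith) (by linarith)
  rcases le_or_gt t 0 with ht | ht
  · -- MVT / concavity case
    obtain ⟨c, hc, hceq⟩ := exists_hasDerivAt_eq_slope (fun u : ℝ => u * (u ^ 2) ^ α)
      (fun u => (2 * α + 1) * (u ^ 2) ^ α) hst
      ((phi_continuous α hα).continuousOn)
      (fun x _ => phi_hasDerivAt α hα x)
    have htne : t - s ≠ 0 := by intro h; linarith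
    have hceq' : (2 * α + 1) * (c ^ 2) ^ α
        = (t * (t ^ 2) ^ α - s * (s ^ 2) ^ α) / (t - s) := hceq
    have hslope : (2 * α + 1) * (c ^ 2) ^ α * (t - s)
        = t * (t ^ 2) ^ α - s * (s ^ 2) ^ α := by
      rw [hceq']
      field_simp
    rw [← hslope]
    have hts : 0 < t - s := by linarith
    have ha : 0 < (2 * α + 1) * (t - s) := by nlinarith
    have h1 : (t ^ 2) ^ α ≤ (c ^ 2) ^ α := by
      apply Real.rpow_le_rpow (sq_nonneg t) _ (by linarith)
      nlinarith [hc.2]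
    have ht2 : 0 ≤ (t ^ 2) ^ α := Real.rpow_nonneg (sq_nonneg t) α
    have step1 := mul_le_mul_of_nonneg_left h1 (le_of_lt ha)
    have hnn : 0 ≤ (2 * α + 1) * (t - s) * (c ^ 2) ^ α := by
      apply mul_nonneg (le_of_lt ha)
      linarith
    have step2 : (2 * α + 1) * (t - s) * (c ^ 2) ^ α
        ≤ ((m + 1) ^ 2) ^ α * ((2 * α + 1) * (t - s) * (c ^ 2) ^ α) :=
      le_mul_of_one_le_left hnn hC1
    nlinarith [step1, step2]
  · -- t > 0, scaling case
    have htne : t ≠ 0 := ne_of_gt ht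
    have hH := h_nonneg α m hα hm2 hmeq (s / t) (le_of_lt ((div_lt_one ht).2 hst))
    have hpos : 0 < t * (t ^ 2) ^ α := mul_pos ht (Real.rpow_pos_of_pos (by nlinarith) α)
    have hsplit : (s ^ 2) ^ α = ((s / t) ^ 2) ^ α * (t ^ 2) ^ α := by
      rw [← Real.mul_rpow (sq_nonneg _) (sq_nonneg _)]
      congr 1
      field_simp
    have hmul := mul_le_mul_of_nonneg_right hH (le_of_lt hpos)
    have eL : (2 * α + 1) * (1 - s / t) * (t * (t ^ 2) ^ α) =
        (2 * α + 1) * (t - s) * (t ^ 2) ^ α := by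
      field_simp
    have eR : ((m + 1) ^ 2) ^ α * (1 - s / t * ((s / t) ^ 2) ^ α) * (t * (t ^ 2) ^ α) =
        ((m + 1) ^ 2) ^ α * (t * (t ^ 2) ^ α - s * (s ^ 2) ^ α) := by
      rw [hsplit]
      field_simp
    rw [eL, eR] at hmul
    exact hmul

/-- the maximum of
`f(x,y) = ((2(α+1)x + y)(x+y)^{2α} − y·y^{2α}) / ((x+y)(x+y)^{2α} − y·y^{2α})`
over the set where the denominator is nonzero equals `2((α+1)m+1)/(m+1)`, where `m ∈ [−3,−2)`
is the unique nonzero solution of `(m+1)^{2α}(m+1) = (2α+1)m+1`.  `z^{2α}` denotes `(z²)^α`. -/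
theorem stmt_11 (α : ℝ) (hα : 1 ≤ α)
    (m : ℝ) (hm : m ∈ Ico (-3 : ℝ) (-2)) (hm0 : m ≠ 0)
    (hmeq : ((m + 1) ^ 2) ^ α * (m + 1) = (2 * α + 1) * m + 1)
    (hm1 : α = 1 → m = -3) :
    IsGreatest
      {r : ℝ | ∃ x y : ℝ, (x + y) * ((x + y) ^ 2) ^ α - y * (y ^ 2) ^ α ≠ 0 ∧
        r = ((2 * (α + 1) * x + y) * ((x + y) ^ 2) ^ α - y * (y ^ 2) ^ α) /
            ((x + y) * ((x + y) ^ 2) ^ α - y * (y ^ 2) ^ α)}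
      (2 * ((α + 1) * m + 1) / (m + 1)) := by
  have hm2 : m < -2 := hm.2
  have hm1ne : m + 1 ≠ 0 := by intro h; linarith
  have hMC : 2 * ((α + 1) * m + 1) / (m + 1) = ((m + 1) ^ 2) ^ α + 1 := by
    rw [div_eq_iff hm1ne]
    linear_combination -hmeq
  have hDmne : (2 * α + 1) * m ≠ 0 := by
    intro h
    rcases mul_eq_zero.1 h with h1 | h1
    · linarith
    · exact hm0 h1
  have h1r : ((1 : ℝ) ^ 2) ^ α = 1 := by rw [one_pow, Real.one_rpow]
  constructor
  · -- membership: x = m, y = 1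
    refine ⟨m, 1, ?_, ?_⟩
    · have hD : (m + 1) * ((m + 1) ^ 2) ^ α - 1 * ((1 : ℝ) ^ 2) ^ α = (2 * α + 1) * m := by
        rw [h1r]; linear_combination hmeq
      rw [hD]
      exact hDmne
    · have hD : (m + 1) * ((m + 1) ^ 2) ^ α - 1 * ((1 : ℝ) ^ 2) ^ α = (2 * α + 1) * m := by
        rw [h1r]; linear_combination hmeq
      rw [hD, h1r]
      rw [div_eq_div_iff hm1ne hDmne]
      linear_combination (-(2 * (α + 1) * m + 1)) * hmeq
  · -- upper bound
    rintro r ⟨x, y, hD, rfl⟩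
    rw [hMC]
    have hx : x ≠ 0 := by
      intro h
      apply hD
      rw [h]; ring
    rcases hx.lt_or_gt with hxneg | hxpos
    · have hDneg : (x + y) * ((x + y) ^ 2) ^ α - y * (y ^ 2) ^ α < 0 := by
        have := phi_lt α hα (show x + y < y by linarith)
        linarith
      rw [div_le_iff_of_neg hDneg]
      have hk := key_ineq α m hα hm2 hmeq (show -y < -(x + y) by linarith)
      rw [neg_sq, neg_sq] at hk
      nlinarith [hk]
    · have hDpos : 0 < (x + y) * ((x + y) ^ 2) ^ α - y * (y ^ 2) ^ α := by
        have := phi_lt α hα (show y < x + y by linarith)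
        linarith
      rw [div_le_iff₀ hDpos]
      have hk := key_ineq α m hα hm2 hmeq (show y < x + y by linarith)
      nlinarith [hk]
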